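/- Let a>1/2, R>0, and let b_+, b_−, κ be non-negative real numbers with b:=max{b_+,b_−} ≤ κ. Let f be a real-valued function, subharmonic on D_a(R), which extends continuously to D̄_a(R), and assume: (i) for every δ>0 there exists M_{−,δ}>0 such that f ≤ M_{−,δ}(|z|^{b_−}+1) on {z∈D_a(R): −π/(2a)<arg z<−δ}; (ii) for every δ>0 there exists M_{+,δ}>0 such that f ≤ M_{+,δ}(|z|^{b_+}+1) on {z∈D_a(R): δ<arg z<π/(2a)}; (iii) there exist an exhaustive family {K_i} of D_a(R) and C>0 such that f ≤ C(|z|^κ+1) on ∂K_i for every i. Then there exists C_1>0 such that f ≤ C_1(|z|^b+1) on D_a(R). -/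

import Mathlib

open Complex Metric Set intervalIntegral Real


/-- The sector `D_a(R) = {z : |z| > R, |arg z| < π/(2a)}`. -/
def Da (a R : ℝ) : Set ℂ :=
  {z : ℂ | R < ‖z‖ ∧ |Complex.arg z| < Real.pi / (2 * a)}

/-- A continuous function is subharmonic on an open set if it satisfies the
sub-mean-value inequality on every closed disc contained in the set. -/
def IsSubharmonicOn (u : ℂ → ℝ) (Ω : Set ℂ) : Prop :=
  ContinuousOn u Ω ∧
  ∀ (z : ℂ) (ρ : ℝ), 0 < ρ → Metric.closedBall z ρ ⊆ Ω →
    u z ≤ (2 * Real.pi)⁻¹ *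
      ∫ θ in (0 : ℝ)..(2 * Real.pi), u (z + ρ * Complex.exp (θ * Complex.I))

/-- An exhaustive family of an open set: an increasing sequence of relatively compact
open subsets whose union is the whole set. -/
structure ExhaustiveFamily (K : ℕ → Set ℂ) (U : Set ℂ) : Prop where
  isOpen : ∀ i, IsOpen (K i)
  compact_closure : ∀ i, IsCompact (closure (K i))
  closure_subset : ∀ i, closure (K i) ⊆ U
  mono : ∀ i, K i ⊆ K (i + 1)
  union_eq : (⋃ i, K i) = U



lemma meanvalue_holo {g : ℂ → ℂ} {U : Set ℂ} (hg : DifferentiableOn ℂ g U)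
    {z : ℂ} {ρ : ℝ} (hρ : 0 < ρ) (hball : closedBall z ρ ⊆ U) :
    ∫ θ in (0:ℝ)..(2 * Real.pi), g (z + ρ * Complex.exp (θ * Complex.I)) = 2 * Real.pi * g z := by
  have h := (hg.mono hball).circleIntegral_sub_inv_smul (mem_ball_self hρ)
  rw [circleIntegral] at h
  have hρ' : (ρ:ℂ) ≠ 0 := by exact_mod_cast hρ.ne'
  have e : ∀ θ : ℝ, deriv (circleMap z ρ) θ • ((circleMap z ρ θ - z)⁻¹ • g (circleMap z ρ θ))
      = Complex.I * g (z + ρ * Complex.exp (θ * Complex.I)) := by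
    intro θ
    rw [deriv_circleMap, circleMap_sub_center]
    have he : Complex.exp (θ * Complex.I) ≠ 0 := Complex.exp_ne_zero _
    simp only [smul_eq_mul, circleMap]
    field_simp
  rw [intervalIntegral.integral_congr (fun θ _ => e θ), intervalIntegral.integral_const_mul] at h
  have h2 : Complex.I * ∫ θ in (0:ℝ)..(2 * Real.pi), g (z + ρ * Complex.exp (θ * Complex.I))
      = Complex.I * (2 * Real.pi * g z) := by rw [h]; simp [smul_eq_mul]; ring
  exact mul_left_cancel₀ Complex.I_ne_zero h2

lemma meanvalue_holo_re {g : ℂ → ℂ} {U : Set ℂ} (hU : IsOpen U) (hg : DifferentiableOn ℂ g U)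
    {z : ℂ} {ρ : ℝ} (hρ : 0 < ρ) (hball : closedBall z ρ ⊆ U) :
    ∫ θ in (0:ℝ)..(2 * Real.pi), (g (z + ρ * Complex.exp (θ * Complex.I))).re
      = 2 * Real.pi * (g z).re := by
  have hmem : ∀ θ : ℝ, z + ρ * Complex.exp (θ * Complex.I) ∈ closedBall z ρ := by
    intro θ
    simp only [mem_closedBall, dist_eq_norm, add_sub_cancel_left]
    rw [norm_mul]
    simp [Complex.norm_exp, abs_of_pos hρ]
  have hmap : Continuous fun θ : ℝ => g (z + ρ * Complex.exp (θ * Complex.I)) :=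
    (hg.continuousOn.mono hball).comp_continuous (by continuity) (fun θ => hmem θ)
  have hint : IntervalIntegrable (fun θ : ℝ => g (z + ρ * Complex.exp (θ * Complex.I)))
      MeasureTheory.volume 0 (2 * Real.pi) := hmap.intervalIntegrable _ _
  have h0 : (0:ℝ) ≤ 2 * Real.pi := by positivity
  have hre : ∫ θ in (0:ℝ)..(2 * Real.pi), (g (z + ρ * Complex.exp (θ * Complex.I))).re
      = (∫ θ in (0:ℝ)..(2 * Real.pi), g (z + ρ * Complex.exp (θ * Complex.I))).re := by
    rw [intervalIntegral.integral_of_le h0, intervalIntegral.integral_of_le h0]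
    simpa using integral_re hint.1
  rw [hre, meanvalue_holo hg hρ hball]
  simp

lemma max_principle (Ω : Set ℂ) (hΩo : IsOpen Ω) (hΩc : IsCompact (closure Ω))
    (u : ℂ → ℝ) (hu : ContinuousOn u (closure Ω))
    (hsm : ∀ (z : ℂ) (ρ : ℝ), 0 < ρ → closedBall z ρ ⊆ Ω →
      u z ≤ (2 * Real.pi)⁻¹ * ∫ θ in (0:ℝ)..(2 * Real.pi), u (z + ρ * Complex.exp (θ * Complex.I)))
    (hb : ∀ z ∈ frontier Ω, u z ≤ 0) : ∀ z ∈ Ω, u z ≤ 0 := by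
  by_contra hcon
  push_neg at hcon
  obtain ⟨z0, hz0, hz0p⟩ := hcon
  have hz0c : z0 ∈ closure Ω := subset_closure hz0
  obtain ⟨w, hw, hwmax⟩ := hΩc.exists_isMaxOn ⟨z0, hz0c⟩ hu
  set M := u w with hM
  have hMpos : 0 < M := lt_of_lt_of_le hz0p (hwmax hz0c)
  set S : Set ℂ := closure Ω ∩ u ⁻¹' {M} with hS
  have hSclosed : IsClosed S := hu.preimage_isClosed_of_isClosed isClosed_closure isClosed_singleton
  have hScompact : IsCompact S := hΩc.of_isClosed_subset hSclosed Set.inter_subset_left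
  have hSne : S.Nonempty := ⟨w, hw, rfl⟩
  obtain ⟨w1, hw1S, hw1max⟩ := hScompact.exists_isMaxOn hSne Complex.continuous_re.continuousOn
  have hw1c : w1 ∈ closure Ω := hw1S.1
  have hw1M : u w1 = M := hw1S.2
  have hw1Ω : w1 ∈ Ω := by
    by_contra hne
    have hf : w1 ∈ frontier Ω := by
      rw [frontier, hΩo.interior_eq]
      exact ⟨hw1c, hne⟩
    have := hb w1 hf
    rw [hw1M] at this
    exact absurd this (not_le.mpr hMpos)
  obtain ⟨r, hr, hrball⟩ := Metric.isOpen_iff.mp hΩo w1 hw1Ω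
  set ρ := r / 2 with hρdef
  have hρ : 0 < ρ := by positivity
  have hball : closedBall w1 ρ ⊆ Ω := (closedBall_subset_ball (by linarith)).trans hrball
  have key := hsm w1 ρ hρ hball
  set φ : ℝ → ℝ := fun θ => u (w1 + ρ * Complex.exp (θ * Complex.I)) with hφ
  have hmem : ∀ θ : ℝ, w1 + ρ * Complex.exp (θ * Complex.I) ∈ closedBall w1 ρ := by
    intro θ
    simp only [mem_closedBall, dist_eq_norm, add_sub_cancel_left]
    rw [norm_mul]
    simp [Complex.norm_exp, abs_of_pos hρ]
  have hφc : Continuous φ :=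
    (hu.mono ((hball.trans subset_closure))).comp_continuous (by continuity) hmem
  have hφle : ∀ θ : ℝ, φ θ ≤ M := fun θ => hwmax (subset_closure (hball (hmem θ)))
  have hφ0 : φ 0 < M := by
    have hp : w1 + ρ * Complex.exp ((0:ℝ) * Complex.I) ∈ Ω := hball (hmem 0)
    refine lt_of_le_of_ne (hφle 0) ?_
    intro heq
    have hpS : w1 + ρ * Complex.exp ((0:ℝ) * Complex.I) ∈ S := ⟨subset_closure hp, heq⟩
    have h2 := hw1max hpS
    simp only [Set.mem_setOf_eq, Complex.ofReal_zero, zero_mul, Complex.exp_zero, mul_one,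
      Complex.add_re, Complex.ofReal_re] at h2
    linarith
  have hlt : (∫ θ in (0:ℝ)..(2 * Real.pi), φ θ) < ∫ θ in (0:ℝ)..(2 * Real.pi), (M : ℝ) := by
    apply intervalIntegral.integral_lt_integral_of_continuousOn_of_le_of_exists_lt
      Real.two_pi_pos hφc.continuousOn continuousOn_const (fun x _ => hφle x)
    exact ⟨0, Set.left_mem_Icc.mpr Real.two_pi_pos.le, hφ0⟩
  rw [intervalIntegral.integral_const] at hlt
  simp only [smul_eq_mul, sub_zero] at hlt
  have : u w1 < M := by
    calc u w1 ≤ (2 * Real.pi)⁻¹ * ∫ θ in (0:ℝ)..(2 * Real.pi), φ θ := key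
    _ < (2 * Real.pi)⁻¹ * ((2 * Real.pi) * M) := by
        apply mul_lt_mul_of_pos_left _ (by positivity)
        exact hlt
    _ = M := by field_simp
  rw [hw1M] at this
  exact lt_irrefl M this

lemma compare_principle {g : ℂ → ℂ} {U : Set ℂ} (hUo : IsOpen U) (hg : DifferentiableOn ℂ g U)
    {f : ℂ → ℝ} {D : Set ℂ}
    (hsub : ∀ (z : ℂ) (ρ : ℝ), 0 < ρ → closedBall z ρ ⊆ D →
      f z ≤ (2 * Real.pi)⁻¹ * ∫ θ in (0:ℝ)..(2 * Real.pi), f (z + ρ * Complex.exp (θ * Complex.I)))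
    {Ω : Set ℂ} (hΩo : IsOpen Ω) (hΩc : IsCompact (closure Ω)) (hΩD : Ω ⊆ D) (hΩU : closure Ω ⊆ U)
    (hfc : ContinuousOn f (closure Ω))
    (hfr : ∀ z ∈ frontier Ω, f z ≤ (g z).re) : ∀ z ∈ Ω, f z ≤ (g z).re := by
  set u : ℂ → ℝ := fun z => f z - (g z).re with hu
  have hgc : ContinuousOn (fun z => (g z).re) (closure Ω) :=
    (Complex.continuous_re.comp_continuousOn ((hg.continuousOn).mono hΩU))
  have huc : ContinuousOn u (closure Ω) := hfc.sub hgc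
  have hmain : ∀ z ∈ Ω, u z ≤ 0 := by
    apply max_principle Ω hΩo hΩc u huc
    · intro z ρ hρ hball
      have hmem : ∀ θ : ℝ, z + ρ * Complex.exp (θ * Complex.I) ∈ closedBall z ρ := by
        intro θ
        simp only [mem_closedBall, dist_eq_norm, add_sub_cancel_left]
        rw [norm_mul]
        simp [Complex.norm_exp, abs_of_pos hρ]
      have hsubcl : closedBall z ρ ⊆ closure Ω := hball.trans subset_closure
      have hfcont : Continuous fun θ : ℝ => f (z + ρ * Complex.exp (θ * Complex.I)) :=
        (hfc.mono hsubcl).comp_continuous (by continuity) hmem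
      have hgcont : Continuous fun θ : ℝ => (g (z + ρ * Complex.exp (θ * Complex.I))).re :=
        (hgc.mono hsubcl).comp_continuous (by continuity) hmem
      have hint : (∫ θ in (0:ℝ)..(2 * Real.pi), u (z + ρ * Complex.exp (θ * Complex.I)))
          = (∫ θ in (0:ℝ)..(2 * Real.pi), f (z + ρ * Complex.exp (θ * Complex.I)))
            - ∫ θ in (0:ℝ)..(2 * Real.pi), (g (z + ρ * Complex.exp (θ * Complex.I))).re :=
        intervalIntegral.integral_sub (hfcont.intervalIntegrable _ _)
          (hgcont.intervalIntegrable _ _)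
      have hmv := meanvalue_holo_re hUo hg hρ (hsubcl.trans (subset_trans Set.Subset.rfl hΩU))
      have h1 : f z ≤ (2 * Real.pi)⁻¹ *
          ∫ θ in (0:ℝ)..(2 * Real.pi), f (z + ρ * Complex.exp (θ * Complex.I)) :=
        hsub z ρ hρ (hball.trans hΩD)
      have h2 : (g z).re = (2 * Real.pi)⁻¹ *
          ∫ θ in (0:ℝ)..(2 * Real.pi), (g (z + ρ * Complex.exp (θ * Complex.I))).re := by
        rw [hmv]
        field_simp
      show f z - (g z).re ≤ _
      rw [hint, h2, mul_sub]
      exact sub_le_sub h1 (le_of_eq rfl)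
    · intro z hz
      have : f z ≤ (g z).re := hfr z hz
      simp only [hu]
      linarith
  intro z hz
  have := hmain z hz
  simp only [hu] at this
  linarith

lemma re_cpow {c : ℝ} {z : ℂ} (hz : z ≠ 0) :
    (z ^ (c:ℂ)).re = ‖z‖ ^ c * Real.cos (c * Complex.arg z) := by
  rw [Complex.cpow_def_of_ne_zero hz, Complex.exp_re]
  have h1 : (Complex.log z * (c:ℂ)).re = c * Real.log (‖z‖) := by
    simp [Complex.mul_re, Complex.log_re]; ring
  have h2 : (Complex.log z * (c:ℂ)).im = c * Complex.arg z := by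
    simp [Complex.mul_im, Complex.log_im]; ring
  rw [h1, h2, Real.rpow_def_of_pos (norm_pos_iff.mpr hz), mul_comm (Real.log _) c]

lemma diff_cpow (c : ℝ) : DifferentiableOn ℂ (fun z : ℂ => z ^ (c:ℂ)) {z : ℂ | 0 < z.re} :=
  fun z hz => (differentiableAt_id.cpow (differentiableAt_const _)
    (Or.inl hz)).differentiableWithinAt

lemma arg_lt_of_mem_S {δ : ℝ} (hδ : 0 < δ) (hδ2 : δ < Real.pi / 2) {z : ℂ}
    (hz : Real.cos δ * ‖z‖ < z.re) : z ≠ 0 ∧ |Complex.arg z| < δ ∧ 0 < z.re := by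
  have hcospos : 0 < Real.cos δ :=
    Real.cos_pos_of_mem_Ioo ⟨by linarith [Real.pi_pos], hδ2⟩
  have hzne : z ≠ 0 := by
    intro h; rw [h] at hz; simp at hz
  have habs : 0 < ‖z‖ := norm_pos_iff.mpr hzne
  have hre : 0 < z.re := lt_trans (by positivity) hz
  refine ⟨hzne, ?_, hre⟩
  by_contra hge
  push_neg at hge
  have h1 : Real.cos |Complex.arg z| ≤ Real.cos δ :=
    Real.cos_le_cos_of_nonneg_of_le_pi hδ.le (Complex.abs_arg_le_pi z) hge
  rw [Real.cos_abs] at h1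
  have h2 : z.re = ‖z‖ * Real.cos (Complex.arg z) := by
    rw [Complex.cos_arg hzne]; field_simp
  nlinarith

lemma mem_S_of_arg_lt {δ : ℝ} (hδpi : δ ≤ Real.pi) {z : ℂ} (hzne : z ≠ 0)
    (harg : |Complex.arg z| < δ) : Real.cos δ * ‖z‖ < z.re := by
  have habs : 0 < ‖z‖ := norm_pos_iff.mpr hzne
  have h1 : Real.cos δ < Real.cos |Complex.arg z| :=
    Real.cos_lt_cos_of_nonneg_of_le_pi (abs_nonneg _) hδpi harg
  rw [Real.cos_abs] at h1
  have h2 : z.re = ‖z‖ * Real.cos (Complex.arg z) := by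
    rw [Complex.cos_arg hzne]; field_simp
  nlinarith

lemma arg_le_of_cos_le {δ : ℝ} (hδ : 0 ≤ δ) {z : ℂ} (hzne : z ≠ 0)
    (hz : Real.cos δ * ‖z‖ ≤ z.re) : |Complex.arg z| ≤ δ := by
  by_contra hge
  push_neg at hge
  have habs : 0 < ‖z‖ := norm_pos_iff.mpr hzne
  have h1 : Real.cos |Complex.arg z| < Real.cos δ :=
    Real.cos_lt_cos_of_nonneg_of_le_pi hδ (Complex.abs_arg_le_pi z) hge
  rw [Real.cos_abs] at h1
  have h2 : z.re = ‖z‖ * Real.cos (Complex.arg z) := by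
    rw [Complex.cos_arg hzne]; field_simp
  nlinarith

lemma mem_closure_Da {a R : ℝ} (hR : 0 < R) {z : ℂ} (hz1 : R ≤ ‖z‖)
    (hz2 : |Complex.arg z| < Real.pi / (2 * a)) : z ∈ closure (Da a R) := by
  have hzne : z ≠ 0 := by
    intro h; rw [h] at hz1; simp at hz1; linarith
  have : Filter.Tendsto (fun t : ℝ => (t:ℂ) * z) (nhdsWithin 1 (Set.Ioi 1)) (nhds z) := by
    have hc : Filter.Tendsto (fun t : ℝ => (t:ℂ) * z) (nhds 1) (nhds z) := by
      have hcont : Continuous (fun t : ℝ => (t:ℂ) * z) := by continuity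
      simpa using hcont.tendsto (1:ℝ)
    exact hc.mono_left nhdsWithin_le_nhds
  apply mem_closure_of_tendsto this
  filter_upwards [self_mem_nhdsWithin] with t ht
  have ht1 : (1:ℝ) < t := ht
  constructor
  · rw [norm_mul]
    simp only [Complex.norm_real, Real.norm_eq_abs, abs_of_pos (by linarith : (0:ℝ) < t)]
    have : ‖z‖ > 0 := norm_pos_iff.mpr hzne
    nlinarith
  · rw [Complex.arg_real_mul z (by linarith : (0:ℝ) < t)]
    exact hz2

set_option maxHeartbeats 1000000 in
/-- a Phragmén–Lindelöf type growth estimate on a sector with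
different growth rates near the two boundary rays. -/
theorem subharmonic_growth_on_sector
    (a R bp bm κ : ℝ) (ha : 1 / 2 < a) (hR : 0 < R)
    (hbp : 0 ≤ bp) (hbm : 0 ≤ bm) (hκ : max bp bm ≤ κ)
    (f : ℂ → ℝ)
    (hfc : ContinuousOn f (closure (Da a R)))
    (hfs : IsSubharmonicOn f (Da a R))
    (hminus : ∀ δ : ℝ, 0 < δ → ∃ M : ℝ, 0 < M ∧ ∀ z ∈ Da a R,
      Complex.arg z < -δ → f z ≤ M * (‖z‖ ^ bm + 1))
    (hplus : ∀ δ : ℝ, 0 < δ → ∃ M : ℝ, 0 < M ∧ ∀ z ∈ Da a R,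
      δ < Complex.arg z → f z ≤ M * (‖z‖ ^ bp + 1))
    (K : ℕ → Set ℂ) (hK : ExhaustiveFamily K (Da a R)) (C : ℝ) (hC : 0 < C)
    (hKbd : ∀ i, ∀ z ∈ frontier (K i), f z ≤ C * (‖z‖ ^ κ + 1)) :
    ∃ C₁ : ℝ, 0 < C₁ ∧ ∀ z ∈ Da a R, f z ≤ C₁ * (‖z‖ ^ max bp bm + 1) := by
  obtain ⟨hfcD, hfsub⟩ := hfs
  set b := max bp bm with hb
  have hbnn : 0 ≤ b := le_trans hbp (le_max_left _ _)
  have hκnn : 0 ≤ κ := le_trans hbnn hκ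
  have hbκ : b ≤ κ := hκ
  have hapos : 0 < a := by linarith
  have hπ := Real.pi_pos
  obtain ⟨δ, hδpos, hδ1, hδlt2a⟩ : ∃ δ : ℝ, 0 < δ ∧ δ * (κ+1) ≤ Real.pi/4 ∧
      δ < Real.pi/(2*a) := by
    refine ⟨min (Real.pi/(4*(κ+1))) (Real.pi/(4*a)), lt_min (by positivity) (by positivity),
      ?_, ?_⟩
    · have h := min_le_left (Real.pi/(4*(κ+1))) (Real.pi/(4*a))
      have hκ1 : (0:ℝ) < κ + 1 := by linarith
      have h2 := (le_div_iff₀ (by positivity : (0:ℝ) < 4*(κ+1))).mp h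
      nlinarith
    · have h := min_le_right (Real.pi/(4*(κ+1))) (Real.pi/(4*a))
      have : Real.pi/(4*a) < Real.pi/(2*a) := by
        apply div_lt_div_of_pos_left hπ (by positivity)
        linarith
      linarith
  have hδle4 : δ ≤ Real.pi/4 := by nlinarith
  have hδlt2 : δ < Real.pi/2 := by linarith
  have hcosδpos : 0 < Real.cos δ := Real.cos_pos_of_mem_Ioo ⟨by linarith, hδlt2⟩
  have hcoslb : ∀ c θ : ℝ, 0 ≤ c → c ≤ κ+1 → |θ| ≤ δ → (1:ℝ)/2 ≤ Real.cos (c*θ) := by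
    intro c θ hc hcκ hθ
    have h1 : |c*θ| ≤ Real.pi/4 := by
      rw [abs_mul, _root_.abs_of_nonneg hc]
      calc c*|θ| ≤ (κ+1)*δ := by nlinarith [abs_nonneg θ]
      _ ≤ Real.pi/4 := by nlinarith
    have h2 : Real.cos (Real.pi/4) ≤ Real.cos |c*θ| :=
      Real.cos_le_cos_of_nonneg_of_le_pi (abs_nonneg _) (by linarith) h1
    rw [Real.cos_abs, Real.cos_pi_div_four] at h2
    nlinarith [Real.sq_sqrt (by norm_num : (0:ℝ) ≤ 2), Real.sqrt_nonneg 2]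
  have hrpow_mono : ∀ r c d : ℝ, 0 < r → 0 ≤ c → c ≤ d → r ^ c ≤ r ^ d + 1 := by
    intro r c d hr hc hcd
    rcases le_or_gt r 1 with h | h
    · have h1 := Real.rpow_le_one hr.le h hc
      have h2 := Real.rpow_nonneg hr.le d
      linarith
    · have := Real.rpow_le_rpow_of_exponent_le h.le hcd
      linarith
  have habs_bound : ∀ c r : ℝ, 0 ≤ c → R ≤ r → r ^ c + 1 ≤ (1 + (R^c)⁻¹) * r^c := by
    intro c r hc hr
    have hR' : 0 < R ^ c := Real.rpow_pos_of_pos hR c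
    have h1 : R ^ c ≤ r ^ c := Real.rpow_le_rpow hR.le hr hc
    have h2 : (R^c)⁻¹ * R^c = 1 := inv_mul_cancel₀ hR'.ne'
    have h3 := mul_le_mul_of_nonneg_left h1 (inv_nonneg.mpr hR'.le)
    nlinarith
  obtain ⟨Mp, hMp, hMpb⟩ := hplus (δ/2) (by positivity)
  obtain ⟨Mm, hMm, hMmb⟩ := hminus (δ/2) (by positivity)
  set M := max Mp Mm with hM
  have hMpos : 0 < M := lt_of_lt_of_le hMp (le_max_left _ _)
  have habsDa : ∀ z ∈ Da a R, 0 < ‖z‖ := fun z hz => lt_trans hR hz.1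
  have hray : ∀ z ∈ Da a R, δ/2 < |Complex.arg z| →
      f z ≤ 2*M*(‖z‖ ^ b + 1) := by
    intro z hz hargz
    have habs := habsDa z hz
    have hrbnn : (0:ℝ) ≤ ‖z‖ ^ b := Real.rpow_nonneg habs.le b
    rcases le_or_gt 0 (Complex.arg z) with h | h
    · have harg : δ/2 < Complex.arg z := by rwa [_root_.abs_of_nonneg h] at hargz
      have h1 := hMpb z hz harg
      have h2 : ‖z‖ ^ bp ≤ ‖z‖ ^ b + 1 :=
        hrpow_mono _ _ _ habs hbp (le_max_left _ _)
      have h3 : Mp ≤ M := le_max_left _ _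
      have h4 : (0:ℝ) ≤ ‖z‖ ^ bp := Real.rpow_nonneg habs.le bp
      calc f z ≤ Mp * (‖z‖ ^ bp + 1) := h1
        _ ≤ M * (‖z‖ ^ bp + 1) := mul_le_mul_of_nonneg_right h3 (by linarith)
        _ ≤ M * (‖z‖ ^ b + 2) := mul_le_mul_of_nonneg_left (by linarith) hMpos.le
        _ ≤ 2*M*(‖z‖ ^ b + 1) := by nlinarith [mul_nonneg hMpos.le hrbnn]
    · have harg : Complex.arg z < -(δ/2) := by
        rw [_root_.abs_of_neg h] at hargz; linarith
      have h1 := hMmb z hz harg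
      have h2 : ‖z‖ ^ bm ≤ ‖z‖ ^ b + 1 :=
        hrpow_mono _ _ _ habs hbm (le_max_right _ _)
      have h3 : Mm ≤ M := le_max_right _ _
      have h4 : (0:ℝ) ≤ ‖z‖ ^ bm := Real.rpow_nonneg habs.le bm
      calc f z ≤ Mm * (‖z‖ ^ bm + 1) := h1
        _ ≤ M * (‖z‖ ^ bm + 1) := mul_le_mul_of_nonneg_right h3 (by linarith)
        _ ≤ M * (‖z‖ ^ b + 2) := mul_le_mul_of_nonneg_left (by linarith) hMpos.le
        _ ≤ 2*M*(‖z‖ ^ b + 1) := by nlinarith [mul_nonneg hMpos.le hrbnn]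
  set cR : ℝ := 1 + (R^κ)⁻¹ with hcRdef
  have hcR : 0 < cR := by positivity
  set C₄ : ℝ := 2 * (C + 4*M) * cR with hC₄def
  have hC₄pos : 0 < C₄ := by positivity
  set Sδ : Set ℂ := {w : ℂ | Real.cos δ * ‖w‖ < w.re} with hSδdef
  have hSopen : IsOpen Sδ :=
    isOpen_lt (continuous_const.mul continuous_norm) Complex.continuous_re
  have hScl : closure Sδ ⊆ {w : ℂ | Real.cos δ * ‖w‖ ≤ w.re} :=
    closure_lt_subset_le (continuous_const.mul continuous_norm) Complex.continuous_re
  have hUo : IsOpen {w : ℂ | 0 < w.re} := isOpen_lt continuous_const Complex.continuous_re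
  -- Step 1
  set g₁ : ℂ → ℂ := fun w => (C₄:ℂ) * w ^ ((κ:ℝ):ℂ) with hg₁def
  have hg₁ : DifferentiableOn ℂ g₁ {w : ℂ | 0 < w.re} := (diff_cpow κ).const_mul _
  have hre₁ : ∀ x : ℂ, x ≠ 0 →
      (g₁ x).re = C₄ * (‖x‖ ^ κ * Real.cos (κ * Complex.arg x)) := by
    intro x hxne
    have he : g₁ x = (C₄:ℂ) * x ^ ((κ:ℝ):ℂ) := rfl
    rw [he, Complex.re_ofReal_mul, re_cpow hxne]
  have hstep1 : ∀ w ∈ Da a R, w ∈ Sδ → f w ≤ C₄ * ‖w‖ ^ κ := by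
    intro w hw hwS
    obtain ⟨i, hi⟩ : ∃ i, w ∈ K i := by
      have hmem : w ∈ ⋃ i, K i := by rw [hK.union_eq]; exact hw
      exact Set.mem_iUnion.mp hmem
    have hKDa : K i ⊆ Da a R := fun x hx => hK.closure_subset i (subset_closure hx)
    have hΩo : IsOpen (K i ∩ Sδ) := (hK.isOpen i).inter hSopen
    have hΩc : IsCompact (closure (K i ∩ Sδ)) :=
      (hK.compact_closure i).of_isClosed_subset isClosed_closure
        (closure_mono Set.inter_subset_left)
    have hclsub : closure (K i ∩ Sδ) ⊆
        Da a R ∩ {x : ℂ | Real.cos δ * ‖x‖ ≤ x.re} := by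
      intro x hx
      have h1 := closure_inter_subset_inter_closure (K i) Sδ hx
      exact ⟨hK.closure_subset i h1.1, hScl h1.2⟩
    have hclU : closure (K i ∩ Sδ) ⊆ {x : ℂ | 0 < x.re} := by
      intro x hx
      obtain ⟨hxDa, hxle⟩ := hclsub hx
      have habs := habsDa x hxDa
      have hpos : 0 < Real.cos δ * ‖x‖ := by positivity
      exact lt_of_lt_of_le hpos hxle
    have hfr : ∀ x ∈ frontier (K i ∩ Sδ), f x ≤ (g₁ x).re := by
      intro x hx
      rcases frontier_inter_subset (K i) Sδ hx with hA | hB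
      · have hxDa : x ∈ Da a R := hK.closure_subset i (frontier_subset_closure hA.1)
        have habs := habsDa x hxDa
        have hxne : x ≠ 0 := by intro h; rw [h] at habs; simp at habs
        have hargle : |Complex.arg x| ≤ δ := arg_le_of_cos_le hδpos.le hxne (hScl hA.2)
        have hf1 := hKbd i x hA.1
        have hcos := hcoslb κ (Complex.arg x) hκnn (by linarith) hargle
        have h2 := habs_bound κ (‖x‖) hκnn hxDa.1.le
        rw [← hcRdef] at h2
        have hκab : (0:ℝ) ≤ ‖x‖ ^ κ := Real.rpow_nonneg habs.le κ
        rw [hre₁ x hxne]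
        calc f x ≤ C * (‖x‖ ^ κ + 1) := hf1
          _ ≤ C * (cR * ‖x‖ ^ κ) := mul_le_mul_of_nonneg_left h2 hC.le
          _ ≤ C₄ * (‖x‖ ^ κ * Real.cos (κ * Complex.arg x)) := by
              rw [hC₄def]
              nlinarith [mul_nonneg (mul_nonneg hcR.le hκab)
                (by linarith : (0:ℝ) ≤ 2 * Real.cos (κ * Complex.arg x) - 1),
                mul_nonneg (mul_nonneg hcR.le hκab) hC.le,
                mul_nonneg (mul_nonneg hcR.le hκab) hMpos.le,
                mul_nonneg (mul_nonneg (mul_nonneg hcR.le hκab)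
                  (by linarith : (0:ℝ) ≤ 2 * Real.cos (κ * Complex.arg x) - 1)) hMpos.le,
                mul_nonneg (mul_nonneg (mul_nonneg hcR.le hκab)
                  (by linarith : (0:ℝ) ≤ 2 * Real.cos (κ * Complex.arg x) - 1)) hC.le]
      · have hxDa : x ∈ Da a R := hK.closure_subset i hB.1
        have habs := habsDa x hxDa
        have hxne : x ≠ 0 := by intro h; rw [h] at habs; simp at habs
        have hxcl : Real.cos δ * ‖x‖ ≤ x.re := hScl (frontier_subset_closure hB.2)
        have hargle : |Complex.arg x| ≤ δ := arg_le_of_cos_le hδpos.le hxne hxcl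
        have hxnot : x ∉ Sδ := by
          rw [hSopen.frontier_eq] at hB
          exact hB.2.2
        have harggt : δ ≤ |Complex.arg x| := by
          by_contra hlt
          push_neg at hlt
          exact hxnot (mem_S_of_arg_lt (by linarith) hxne hlt)
        have hf1 := hray x hxDa (by linarith)
        have h2 : ‖x‖ ^ b ≤ ‖x‖ ^ κ + 1 :=
          hrpow_mono _ _ _ habs hbnn hbκ
        have h3 := habs_bound κ (‖x‖) hκnn hxDa.1.le
        rw [← hcRdef] at h3
        have hcos := hcoslb κ (Complex.arg x) hκnn (by linarith) hargle
        have hκab : (0:ℝ) ≤ ‖x‖ ^ κ := Real.rpow_nonneg habs.le κ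
        rw [hre₁ x hxne]
        calc f x ≤ 2*M*(‖x‖ ^ b + 1) := hf1
          _ ≤ 2*M*(‖x‖ ^ κ + 2) :=
              mul_le_mul_of_nonneg_left (by linarith) (by positivity)
          _ ≤ 4*M*(‖x‖ ^ κ + 1) := by nlinarith [mul_nonneg hMpos.le hκab]
          _ ≤ 4*M*(cR * ‖x‖ ^ κ) := mul_le_mul_of_nonneg_left h3 (by positivity)
          _ ≤ C₄ * (‖x‖ ^ κ * Real.cos (κ * Complex.arg x)) := by
              rw [hC₄def]
              nlinarith [mul_nonneg (mul_nonneg hcR.le hκab)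
                (by linarith : (0:ℝ) ≤ 2 * Real.cos (κ * Complex.arg x) - 1),
                mul_nonneg (mul_nonneg hcR.le hκab) hC.le,
                mul_nonneg (mul_nonneg hcR.le hκab) hMpos.le,
                mul_nonneg (mul_nonneg (mul_nonneg hcR.le hκab)
                  (by linarith : (0:ℝ) ≤ 2 * Real.cos (κ * Complex.arg x) - 1)) hMpos.le,
                mul_nonneg (mul_nonneg (mul_nonneg hcR.le hκab)
                  (by linarith : (0:ℝ) ≤ 2 * Real.cos (κ * Complex.arg x) - 1)) hC.le]
    have happ := compare_principle hUo hg₁ hfsub hΩo hΩc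
      (fun x hx => hKDa hx.1) hclU
      (hfc.mono (fun x hx => subset_closure ((hclsub hx).1))) hfr w ⟨hi, hwS⟩
    have habs := habsDa w hw
    have hwne : w ≠ 0 := by intro h; rw [h] at habs; simp at habs
    rw [hre₁ w hwne] at happ
    have hcos1 := Real.cos_le_one (κ * Complex.arg w)
    have hκab : (0:ℝ) ≤ ‖w‖ ^ κ := Real.rpow_nonneg habs.le κ
    calc f w ≤ C₄ * (‖w‖ ^ κ * Real.cos (κ * Complex.arg w)) := happ
      _ ≤ C₄ * ‖w‖ ^ κ := by nlinarith [mul_nonneg hC₄pos.le hκab]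
  -- constants for step 2
  set T₀ : Set ℂ := {w : ℂ | R ≤ ‖w‖ ∧ ‖w‖ ≤ R ∧
    Real.cos δ * ‖w‖ ≤ w.re} with hT₀def
  have hT₀sub : T₀ ⊆ closure (Da a R) := by
    intro w hw
    have hwne : w ≠ 0 := by
      intro h
      have h1 : R ≤ ‖w‖ := hw.1
      rw [h] at h1; simp at h1; linarith
    exact mem_closure_Da hR hw.1
      (lt_of_le_of_lt (arg_le_of_cos_le hδpos.le hwne hw.2.2) hδlt2a)
  have hT₀closed : IsClosed T₀ := by
    have h1 : IsClosed {w : ℂ | R ≤ ‖w‖} :=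
      isClosed_le continuous_const continuous_norm
    have h2 : IsClosed {w : ℂ | ‖w‖ ≤ R} :=
      isClosed_le continuous_norm continuous_const
    have h3 : IsClosed {w : ℂ | Real.cos δ * ‖w‖ ≤ w.re} :=
      isClosed_le (continuous_const.mul continuous_norm) Complex.continuous_re
    have : T₀ = {w : ℂ | R ≤ ‖w‖} ∩ ({w : ℂ | ‖w‖ ≤ R} ∩
        {w : ℂ | Real.cos δ * ‖w‖ ≤ w.re}) := by
      ext w; simp [hT₀def, Set.mem_setOf_eq, and_assoc]
    rw [this]; exact h1.inter (h2.inter h3)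
  have hT₀compact : IsCompact T₀ := by
    apply (isCompact_closedBall (0:ℂ) R).of_isClosed_subset hT₀closed
    intro w hw
    simpa [Complex.dist_eq] using hw.2.1
  have hT₀ne : T₀.Nonempty := by
    have hAR : ‖(R:ℂ)‖ = R := by
      rw [Complex.norm_real, Real.norm_eq_abs]; exact _root_.abs_of_pos hR
    refine ⟨(R:ℂ), ?_, ?_, ?_⟩
    · rw [hAR]
    · rw [hAR]
    · rw [hAR, Complex.ofReal_re]
      nlinarith [Real.cos_le_one δ]
  obtain ⟨w₀, hw₀T, hw₀max⟩ := hT₀compact.exists_isMaxOn hT₀ne (hfc.mono hT₀sub)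
  set B₀ : ℝ := max (f w₀) 0 with hB₀def
  have hB₀nn : 0 ≤ B₀ := le_max_right _ _
  have hB₀ : ∀ w ∈ T₀, f w ≤ B₀ := fun w hw => le_trans (hw₀max hw) (le_max_left _ _)
  set A : ℝ := 4*M*(1 + (R^b)⁻¹) with hAdef
  have hApos : 0 < A := by positivity
  -- Step 2
  have hstep2 : ∀ z ∈ Da a R, z ∈ Sδ → f z ≤ (B₀ + A + 1) * (‖z‖ ^ b + 1) := by
    intro z hz hzS
    have habs := habsDa z hz
    have hrbnn : (0:ℝ) ≤ ‖z‖ ^ b := Real.rpow_nonneg habs.le b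
    have hrκnn : (0:ℝ) ≤ ‖z‖ ^ (κ+1) := Real.rpow_nonneg habs.le _
    have key : ∀ ε : ℝ, 0 < ε →
        f z ≤ B₀ + A * ‖z‖ ^ b + ε * ‖z‖ ^ (κ+1) := by
      intro ε hε
      set ρr : ℝ := max (max (‖z‖ + 1) (R + 1)) (2*C₄/ε) with hρrdef
      have hρrR : R < ρr := by
        have h := le_trans (le_max_right (‖z‖ + 1) (R + 1)) (le_max_left _ (2*C₄/ε))
        linarith
      have hρrz : ‖z‖ < ρr := by
        have h := le_trans (le_max_left (‖z‖ + 1) (R + 1)) (le_max_left _ (2*C₄/ε))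
        linarith
      have hρrC : 2*C₄/ε ≤ ρr := le_max_right _ _
      have hρrpos : 0 < ρr := lt_trans hR hρrR
      set Ω₂ : Set ℂ := {x : ℂ | R < ‖x‖ ∧ ‖x‖ < ρr ∧
        Real.cos δ * ‖x‖ < x.re} with hΩ₂def
      have hΩ₂eq : Ω₂ = {x : ℂ | R < ‖x‖} ∩ ({x : ℂ | ‖x‖ < ρr} ∩ Sδ) := by
        ext x; exact Iff.rfl
      have hΩ₂o : IsOpen Ω₂ := by
        rw [hΩ₂eq]
        exact (isOpen_lt continuous_const continuous_norm).inter
          ((isOpen_lt continuous_norm continuous_const).inter hSopen)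
      have hΩ₂cl : closure Ω₂ ⊆ {x : ℂ | R ≤ ‖x‖ ∧ ‖x‖ ≤ ρr ∧
          Real.cos δ * ‖x‖ ≤ x.re} := by
        apply closure_minimal
        · intro x hx; exact ⟨hx.1.le, hx.2.1.le, hx.2.2.le⟩
        · have h1 : IsClosed {x : ℂ | R ≤ ‖x‖} :=
            isClosed_le continuous_const continuous_norm
          have h2 : IsClosed {x : ℂ | ‖x‖ ≤ ρr} :=
            isClosed_le continuous_norm continuous_const
          have h3 : IsClosed {x : ℂ | Real.cos δ * ‖x‖ ≤ x.re} :=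
            isClosed_le (continuous_const.mul continuous_norm) Complex.continuous_re
          have he : {x : ℂ | R ≤ ‖x‖ ∧ ‖x‖ ≤ ρr ∧
              Real.cos δ * ‖x‖ ≤ x.re} = {x : ℂ | R ≤ ‖x‖} ∩
              ({x : ℂ | ‖x‖ ≤ ρr} ∩
                {x : ℂ | Real.cos δ * ‖x‖ ≤ x.re}) := rfl
          rw [he]; exact h1.inter (h2.inter h3)
      have hΩ₂c : IsCompact (closure Ω₂) := by
        apply (isCompact_closedBall (0:ℂ) ρr).of_isClosed_subset isClosed_closure
        intro x hx
        have h := (hΩ₂cl hx).2.1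
        simpa [Complex.dist_eq] using h
      have hargle : ∀ x, x ∈ closure Ω₂ → x ≠ 0 ∧ |Complex.arg x| ≤ δ := by
        intro x hx
        obtain ⟨h1, h2, h3⟩ := hΩ₂cl hx
        have hxne : x ≠ 0 := by intro h; rw [h] at h1; simp at h1; linarith
        exact ⟨hxne, arg_le_of_cos_le hδpos.le hxne h3⟩
      have hΩ₂Da : Ω₂ ⊆ Da a R := by
        intro x hx
        have hxne : x ≠ 0 := by
          intro h; have h1 := hx.1; rw [h] at h1; simp at h1; linarith
        exact ⟨hx.1, lt_of_le_of_lt (arg_le_of_cos_le hδpos.le hxne hx.2.2.le) hδlt2a⟩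
      have hclDa : closure Ω₂ ⊆ closure (Da a R) := by
        intro x hx
        obtain ⟨hxne, hxargle⟩ := hargle x hx
        exact mem_closure_Da hR (hΩ₂cl hx).1 (lt_of_le_of_lt hxargle hδlt2a)
      have hclU : closure Ω₂ ⊆ {x : ℂ | 0 < x.re} := by
        intro x hx
        obtain ⟨h1, h2, h3⟩ := hΩ₂cl hx
        have hpos : 0 < Real.cos δ * ‖x‖ :=
          mul_pos hcosδpos (lt_of_lt_of_le hR h1)
        exact lt_of_lt_of_le hpos h3
      set g₂ : ℂ → ℂ := fun x => (B₀:ℂ) + (A:ℂ) * x ^ ((b:ℝ):ℂ) + (ε:ℂ) * x ^ ((κ+1:ℝ):ℂ)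
        with hg₂def
      have hg₂ : DifferentiableOn ℂ g₂ {x : ℂ | 0 < x.re} :=
        ((differentiableOn_const _).add ((diff_cpow b).const_mul _)).add
          ((diff_cpow (κ+1)).const_mul _)
      have hre₂ : ∀ x : ℂ, x ≠ 0 → (g₂ x).re =
          B₀ + A * (‖x‖ ^ b * Real.cos (b * Complex.arg x))
             + ε * (‖x‖ ^ (κ+1) * Real.cos ((κ+1) * Complex.arg x)) := by
        intro x hxne
        have he : g₂ x = (B₀:ℂ) + (A:ℂ) * x ^ ((b:ℝ):ℂ) + (ε:ℂ) * x ^ ((κ+1:ℝ):ℂ) := rfl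
        rw [he]
        simp only [Complex.add_re, Complex.ofReal_re, Complex.re_ofReal_mul]
        rw [re_cpow hxne, re_cpow hxne]
      have hfr : ∀ x ∈ frontier Ω₂, f x ≤ (g₂ x).re := by
        intro x hx
        have hxcl : x ∈ closure Ω₂ := frontier_subset_closure hx
        obtain ⟨h1, h2, h3⟩ := hΩ₂cl hxcl
        obtain ⟨hxne, hxargle⟩ := hargle x hxcl
        have hxabs : 0 < ‖x‖ := lt_of_lt_of_le hR h1
        have hxnot : x ∉ Ω₂ := by rw [hΩ₂o.frontier_eq] at hx; exact hx.2
        have hcosb := hcoslb b (Complex.arg x) hbnn (by linarith) hxargle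
        have hcosκ := hcoslb (κ+1) (Complex.arg x) (by linarith) (le_refl _) hxargle
        have hxb : (0:ℝ) ≤ ‖x‖ ^ b := Real.rpow_nonneg hxabs.le b
        have hxκ1 : (0:ℝ) ≤ ‖x‖ ^ (κ+1) := Real.rpow_nonneg hxabs.le _
        rw [hre₂ x hxne]
        have ht2 : (0:ℝ) ≤ A * (‖x‖ ^ b * Real.cos (b * Complex.arg x)) :=
          mul_nonneg hApos.le (mul_nonneg hxb (by linarith))
        have ht3 : (0:ℝ) ≤ ε * (‖x‖ ^ (κ+1) * Real.cos ((κ+1) * Complex.arg x)) :=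
          mul_nonneg hε.le (mul_nonneg hxκ1 (by linarith))
        rcases eq_or_lt_of_le h1 with hRe | hRlt
        · have hxT : x ∈ T₀ := ⟨h1, hRe.ge, h3⟩
          have := hB₀ x hxT
          linarith
        · have hxDa : x ∈ Da a R := ⟨hRlt, lt_of_le_of_lt hxargle hδlt2a⟩
          by_cases hS : Real.cos δ * ‖x‖ < x.re
          · have hxρ : ‖x‖ = ρr := by
              by_contra hne
              exact hxnot ⟨hRlt, lt_of_le_of_ne h2 hne, hS⟩
            have hf1 := hstep1 x hxDa hS
            have hrκ : ‖x‖ ^ (κ+1) = ‖x‖ ^ κ * ‖x‖ := by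
              rw [Real.rpow_add hxabs, Real.rpow_one]
            have hεnum : 2*C₄ ≤ ρr * ε := by
              rw [div_le_iff₀ hε] at hρrC; linarith
            have hxκnn : (0:ℝ) ≤ ‖x‖ ^ κ := Real.rpow_nonneg hxabs.le κ
            have hkey : C₄ * ‖x‖ ^ κ ≤ ε/2 * ‖x‖ ^ (κ+1) := by
              rw [hrκ, hxρ]
              have h0 : (0:ℝ) ≤ ρr ^ κ := Real.rpow_nonneg hρrpos.le κ
              calc C₄ * ρr ^ κ ≤ (ε/2*ρr) * ρr ^ κ :=
                    mul_le_mul_of_nonneg_right (by linarith) h0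
                _ = ε/2 * (ρr ^ κ * ρr) := by ring
            have hkey2 : ε/2 * ‖x‖ ^ (κ+1) ≤
                ε * (‖x‖ ^ (κ+1) * Real.cos ((κ+1)*Complex.arg x)) := by
              calc ε/2 * ‖x‖ ^ (κ+1)
                  = ε * (‖x‖ ^ (κ+1) * (1/2)) := by ring
                _ ≤ ε * (‖x‖ ^ (κ+1) * Real.cos ((κ+1)*Complex.arg x)) :=
                    mul_le_mul_of_nonneg_left
                      (mul_le_mul_of_nonneg_left (by linarith) hxκ1) hε.le
            linarith [hf1, hkey, hkey2, ht2, hB₀nn]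
          · have hxray : δ ≤ |Complex.arg x| := by
              by_contra hlt; push_neg at hlt
              exact hS (mem_S_of_arg_lt (by linarith) hxne hlt)
            have hf1 := hray x hxDa (by linarith)
            have hb2 := habs_bound b (‖x‖) hbnn hRlt.le
            have hkey : 2*M*(‖x‖ ^ b + 1) ≤
                A * (‖x‖ ^ b * Real.cos (b * Complex.arg x)) := by
              rw [hAdef]
              calc 2*M*(‖x‖ ^ b + 1)
                  ≤ 2*M*((1 + (R^b)⁻¹) * ‖x‖ ^ b) :=
                    mul_le_mul_of_nonneg_left hb2 (by positivity)
                _ = 4*M*(1 + (R^b)⁻¹) * (‖x‖ ^ b * (1/2)) := by ring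
                _ ≤ 4*M*(1 + (R^b)⁻¹) * (‖x‖ ^ b * Real.cos (b*Complex.arg x)) :=
                    mul_le_mul_of_nonneg_left
                      (mul_le_mul_of_nonneg_left (by linarith) hxb) (by positivity)
            linarith [hf1, hkey, ht3, hB₀nn]
      have hzne : z ≠ 0 := by intro h; rw [h] at habs; simp at habs
      have happ := compare_principle hUo hg₂ hfsub hΩ₂o hΩ₂c hΩ₂Da hclU
        (hfc.mono hclDa) hfr z ⟨hz.1, hρrz, hzS⟩
      rw [hre₂ z hzne] at happ
      have e1 : A * (‖z‖ ^ b * Real.cos (b*Complex.arg z)) ≤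
          A * ‖z‖ ^ b := by
        have h := mul_le_mul_of_nonneg_left (Real.cos_le_one (b*Complex.arg z)) hrbnn
        rw [mul_one] at h
        exact mul_le_mul_of_nonneg_left h hApos.le
      have e2 : ε * (‖z‖ ^ (κ+1) * Real.cos ((κ+1)*Complex.arg z)) ≤
          ε * ‖z‖ ^ (κ+1) := by
        have h := mul_le_mul_of_nonneg_left (Real.cos_le_one ((κ+1)*Complex.arg z)) hrκnn
        rw [mul_one] at h
        exact mul_le_mul_of_nonneg_left h hε.le
      linarith [happ, e1, e2]
    have hfin : f z ≤ B₀ + A * ‖z‖ ^ b := by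
      apply le_of_forall_pos_le_add
      intro ε' hε'
      have hd : 0 < ‖z‖ ^ (κ+1) + 1 := by positivity
      have hk := key (ε'/(‖z‖ ^ (κ+1) + 1)) (by positivity)
      have h2 : ε'/(‖z‖ ^ (κ+1) + 1) * ‖z‖ ^ (κ+1) ≤ ε' := by
        rw [div_mul_eq_mul_div, div_le_iff₀ hd]
        exact mul_le_mul_of_nonneg_left (by linarith) hε'.le
      linarith
    nlinarith [hfin, mul_nonneg hB₀nn hrbnn, hrbnn, hApos, hB₀nn]
  refine ⟨B₀ + A + 1 + 2*M, by positivity, ?_⟩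
  intro z hz
  have habs := habsDa z hz
  have hrbnn : (0:ℝ) ≤ ‖z‖ ^ b := Real.rpow_nonneg habs.le b
  by_cases hzS : z ∈ Sδ
  · have := hstep2 z hz hzS
    nlinarith
  · have hzne : z ≠ 0 := by
      intro h; rw [h] at habs; simp at habs
    have harg : δ ≤ |Complex.arg z| := by
      by_contra hlt
      push_neg at hlt
      exact hzS (mem_S_of_arg_lt (by linarith) hzne hlt)
    have := hray z hz (by linarith)
    nlinarith
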